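/- arXiv:1602.07830 — 2 statements merged into one kernel-verified Lean document; each statement's English description precedes it below -/
import Mathlib

section
/- Let δ ∈ (0,1/2) and A(y) = y·log|y| on ℝ (with A(0)=0). Define T_A f(x) = ∫₀¹ (A(x) − A(y) − A′(y)(x − y))/(x − y)² · y^(δ−1) dy for x ∈ (0,1), where f(y) = y^(δ−1) χ_{(0,1)}(y). Then for every x ∈ (0,1), |T_A f(x)| ≥ (1/2) δ⁻² x^(δ−1). -/
open MeasureTheory Set

/-- `A(y) = y log |y|` (with `A 0 = 0` since `Real.log 0 = 0`). -/
noncomputable def Afun (y : ℝ) : ℝ := y * Real.log |y|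

/-- `A'(y) = 1 + log |y|` for `y ≠ 0`. -/
noncomputable def Afun' (y : ℝ) : ℝ := 1 + Real.log |y|

/-- The commutator-type operator applied to `f(y) = y^(δ-1) χ_(0,1)(y)`. -/
noncomputable def TAf (δ x : ℝ) : ℝ :=
  ∫ y in Set.Ioo (0:ℝ) 1,
    ((Afun x - Afun y - Afun' y * (x - y)) / (x - y) ^ 2) * y ^ (δ - 1)

private lemma numer_eq {x y : ℝ} (hx : 0 < x) (hy : 0 < y) :
    Afun x - Afun y - Afun' y * (x - y)
      = x * (Real.log x - Real.log y) - (x - y) := by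
  simp only [Afun, Afun', abs_of_pos hx, abs_of_pos hy]; ring

private lemma numer_nonneg {x y : ℝ} (hx : 0 < x) (hy : 0 < y) :
    0 ≤ x * (Real.log x - Real.log y) - (x - y) := by
  have h1 : Real.log y - Real.log x ≤ y / x - 1 := by
    rw [← Real.log_div hy.ne' hx.ne']
    exact Real.log_le_sub_one_of_pos (div_pos hy hx)
  have h2 : x * (y / x - 1) = y - x := by field_simp
  nlinarith [mul_le_mul_of_nonneg_left h1 hx.le]

private lemma numer_le {x y : ℝ} (hx : 0 < x) (hy : 0 < y) :
    x * (Real.log x - Real.log y) - (x - y) ≤ (x - y) ^ 2 / y := by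
  have h1 : Real.log x - Real.log y ≤ x / y - 1 := by
    rw [← Real.log_div hx.ne' hy.ne']
    exact Real.log_le_sub_one_of_pos (div_pos hx hy)
  have h2 : x * (x / y - 1) - (x - y) = (x - y) ^ 2 / y := by field_simp
  nlinarith [mul_le_mul_of_nonneg_left h1 hx.le]

private lemma neg_log_le {δ y : ℝ} (hδ : 0 < δ) (hy : 0 < y) :
    -Real.log y ≤ (2 / δ) * y ^ (-(δ / 2)) := by
  have h1 : Real.log (y ^ (-(δ / 2))) ≤ y ^ (-(δ / 2)) - 1 :=
    Real.log_le_sub_one_of_pos (Real.rpow_pos_of_pos hy _)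
  rw [Real.log_rpow hy] at h1
  have h2 : (0:ℝ) < 2 / δ := by positivity
  have h3 := mul_le_mul_of_nonneg_left h1 h2.le
  have h4 : 2 / δ * (-(δ / 2) * Real.log y) = -Real.log y := by field_simp
  nlinarith [Real.rpow_pos_of_pos hy (-(δ/2))]

set_option maxHeartbeats 1000000 in
theorem TA_lower_bound (δ : ℝ) (hδ : δ ∈ Set.Ioo (0:ℝ) (1/2))
    (x : ℝ) (hx : x ∈ Set.Ioo (0:ℝ) 1) :
    (1/2) * δ⁻¹ ^ 2 * x ^ (δ - 1) ≤ |TAf δ x| := by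
  obtain ⟨hδ0, hδ2⟩ := hδ
  obtain ⟨hx0, hx1⟩ := hx
  set g : ℝ → ℝ := fun y =>
    ((Afun x - Afun y - Afun' y * (x - y)) / (x - y) ^ 2) * y ^ (δ - 1) with hg_def
  set h : ℝ → ℝ := fun y =>
    ((Real.log x - Real.log y) / x - (x - y) / x ^ 2) * y ^ (δ - 1) with hh_def
  have hTA : TAf δ x = ∫ y in Ioo (0:ℝ) 1, g y := rfl
  -- nonnegativity of g
  have hgnn : ∀ y ∈ Ioo (0:ℝ) 1, 0 ≤ g y := by
    intro y hy
    refine mul_nonneg (div_nonneg ?_ (sq_nonneg _)) (Real.rpow_nonneg hy.1.le _)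
    rw [numer_eq hx0 hy.1]
    exact numer_nonneg hx0 hy.1
  set C : ℝ := max ((x/2) ^ (δ - 2)) (8 / (x * δ)) with hC_def
  have hC0 : (0:ℝ) < C :=
    lt_max_iff.mpr (Or.inl (Real.rpow_pos_of_pos (by linarith) _))
  -- pointwise upper bound on g
  have hgbd : ∀ y ∈ Ioo (0:ℝ) 1, g y ≤ C * y ^ (δ/2 - 1) := by
    intro y hy
    obtain ⟨hy0, hy1⟩ := hy
    have hrnn : (0:ℝ) ≤ y ^ (δ - 1) := Real.rpow_nonneg hy0.le _
    have hr2nn : (0:ℝ) ≤ y ^ (δ/2 - 1) := Real.rpow_nonneg hy0.le _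
    by_cases hcase : y < x/2
    · -- small y
      have hlogx : Real.log x ≤ 0 := Real.log_nonpos hx0.le hx1.le
      have hlognn : 0 ≤ -Real.log y := by
        have := Real.log_nonpos hy0.le hy1.le; linarith
      have hN : Afun x - Afun y - Afun' y * (x - y) ≤ x * (-Real.log y) := by
        rw [numer_eq hx0 hy0]; nlinarith
      have hden : (x/2)^2 ≤ (x - y)^2 := by nlinarith
      have hdpos : (0:ℝ) < (x/2)^2 := by positivity
      have s1 : (Afun x - Afun y - Afun' y * (x - y)) / (x - y) ^ 2
          ≤ (x * (-Real.log y)) / (x/2)^2 :=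
        div_le_div₀ (by positivity) hN hdpos hden
      have s2 : g y ≤ (x * (-Real.log y)) / (x/2)^2 * y ^ (δ - 1) :=
        mul_le_mul_of_nonneg_right s1 hrnn
      have s3 : (x * (-Real.log y)) / (x/2)^2 = (4 / x) * (-Real.log y) := by
        field_simp; ring
      have s4 : -Real.log y ≤ (2/δ) * y ^ (-(δ/2)) := neg_log_le hδ0 hy0
      have s5 : (4/x) * (-Real.log y) * y ^ (δ-1)
          ≤ (4/x) * ((2/δ) * y ^ (-(δ/2))) * y ^ (δ-1) := by
        have h4x : (0:ℝ) ≤ 4 / x := by positivity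
        exact mul_le_mul_of_nonneg_right (mul_le_mul_of_nonneg_left s4 h4x) hrnn
      have s6 : (4/x) * ((2/δ) * y ^ (-(δ/2))) * y ^ (δ-1)
          = (8/(x*δ)) * y ^ (δ/2 - 1) := by
        rw [show (4:ℝ)/x * ((2/δ) * y ^ (-(δ/2))) * y ^ (δ-1)
            = (8/(x*δ)) * (y ^ (-(δ/2)) * y ^ (δ-1)) by ring,
          ← Real.rpow_add hy0]
        congr 2
        ring
      have s7 : (8/(x*δ)) * y ^ (δ/2-1) ≤ C * y ^ (δ/2-1) :=
        mul_le_mul_of_nonneg_right (le_max_right _ _) hr2nn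
      calc g y ≤ (x * (-Real.log y)) / (x/2)^2 * y ^ (δ - 1) := s2
        _ = (4/x) * (-Real.log y) * y ^ (δ-1) := by rw [s3]
        _ ≤ (4/x) * ((2/δ) * y ^ (-(δ/2))) * y ^ (δ-1) := s5
        _ = (8/(x*δ)) * y ^ (δ/2 - 1) := s6
        _ ≤ C * y ^ (δ/2 - 1) := s7
    · -- y ≥ x/2
      have hx2 : x/2 ≤ y := not_lt.1 hcase
      rcases eq_or_ne y x with rfl | hne
      · have : g y = 0 := by
          simp [hg_def, sub_self]
        rw [this]
        positivity
      · have hsub : x - y ≠ 0 := sub_ne_zero.mpr (Ne.symm hne)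
        have hd : (0:ℝ) < (x - y)^2 := pow_two_pos_of_ne_zero hsub
        have s1 : (Afun x - Afun y - Afun' y * (x - y)) / (x - y) ^ 2
            ≤ ((x - y)^2 / y) / (x - y)^2 := by
          apply (div_le_div_iff_of_pos_right hd).mpr
          rw [numer_eq hx0 hy0]
          exact numer_le hx0 hy0
        have s2 : ((x - y)^2 / y) / (x - y)^2 = 1/y := by
          field_simp
        have s3 : g y ≤ (1/y) * y ^ (δ-1) :=
          mul_le_mul_of_nonneg_right (s1.trans_eq s2) hrnn
        have s4 : (1/y) * y ^ (δ-1) = y ^ (δ-2) := by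
          rw [one_div, ← Real.rpow_neg_one, ← Real.rpow_add hy0]
          congr 1
          ring
        have s5 : y ^ (δ-2) ≤ (x/2) ^ (δ-2) :=
          Real.rpow_le_rpow_of_nonpos (by linarith) hx2 (by linarith)
        have s6 : (x/2) ^ (δ-2) ≤ (x/2) ^ (δ-2) * y ^ (δ/2-1) := by
          nth_rewrite 1 [← mul_one ((x/2) ^ (δ-2))]
          exact mul_le_mul_of_nonneg_left
            (Real.one_le_rpow_of_pos_of_le_one_of_nonpos hy0 hy1.le (by linarith))
            (Real.rpow_nonneg (by linarith) _)
        have s7 : (x/2) ^ (δ-2) * y ^ (δ/2-1) ≤ C * y ^ (δ/2-1) :=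
          mul_le_mul_of_nonneg_right (le_max_left _ _) hr2nn
        calc g y ≤ (1/y) * y ^ (δ-1) := s3
          _ = y ^ (δ-2) := s4
          _ ≤ (x/2) ^ (δ-2) := s5
          _ ≤ (x/2) ^ (δ-2) * y ^ (δ/2-1) := s6
          _ ≤ C * y ^ (δ/2-1) := s7
  -- measurability of g on (0,1)
  have hgmeas : AEStronglyMeasurable g (volume.restrict (Ioo (0:ℝ) 1)) := by
    have hS : MeasurableSet (Ioo (0:ℝ) 1 \ {x}) :=
      measurableSet_Ioo.diff (measurableSet_singleton x)
    have hcont : ContinuousOn g (Ioo (0:ℝ) 1 \ {x}) := by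
      intro y hy
      obtain ⟨⟨hy0, hy1⟩, hyx⟩ := hy
      have hyx' : y ≠ x := by simpa using hyx
      apply ContinuousAt.continuousWithinAt
      have hlog : ContinuousAt (fun y : ℝ => Real.log |y|) y :=
        (Real.continuousAt_log (by simpa using hy0.ne')).comp continuous_abs.continuousAt
      have hA : ContinuousAt Afun y := by
        unfold Afun
        exact continuousAt_id.mul hlog
      have hA' : ContinuousAt Afun' y := by
        unfold Afun'
        exact continuousAt_const.add hlog
      have hdenne : ((x - y) ^ 2 : ℝ) ≠ 0 :=
        pow_ne_zero 2 (sub_ne_zero.mpr (Ne.symm hyx'))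
      exact (((continuousAt_const.sub hA).sub
          (hA'.mul (continuousAt_const.sub continuousAt_id))).div
          ((continuousAt_const.sub continuousAt_id).pow 2) hdenne).mul
          (Real.continuousAt_rpow_const y _ (Or.inl hy0.ne'))
    have hae : (Ioo (0:ℝ) 1 \ {x} : Set ℝ) =ᵐ[volume] (Ioo (0:ℝ) 1 : Set ℝ) := by
      apply diff_ae_eq_self.mpr
      have h0 : volume ({x} : Set ℝ) = 0 := measure_singleton x
      exact measure_mono_null Set.inter_subset_right h0
    have := hcont.aestronglyMeasurable (μ := volume) hS
    rwa [Measure.restrict_congr_set hae] at this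
  -- integrability of g on (0,1)
  have hGint : IntegrableOn (fun y : ℝ => C * y ^ (δ/2 - 1)) (Ioo (0:ℝ) 1) := by
    have h1 : IntervalIntegrable (fun y : ℝ => y ^ (δ/2 - 1)) volume 0 1 :=
      intervalIntegral.intervalIntegrable_rpow' (by linarith)
    exact (((intervalIntegrable_iff_integrableOn_Ioc_of_le zero_le_one).mp h1).mono_set
      Ioo_subset_Ioc_self).const_mul C
  have hgint : IntegrableOn g (Ioo (0:ℝ) 1) := by
    apply Integrable.mono' hGint hgmeas
    filter_upwards [ae_restrict_mem measurableSet_Ioo] with y hy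
    rw [Real.norm_eq_abs, abs_of_nonneg (hgnn y hy)]
    exact hgbd y hy
  -- h ≤ g on (0, x)
  have hhg : ∀ y ∈ Ioo (0:ℝ) x, h y ≤ g y := by
    intro y hy
    obtain ⟨hy0, hyx⟩ := hy
    refine mul_le_mul_of_nonneg_right ?_ (Real.rpow_nonneg hy0.le _)
    have e1 : (Real.log x - Real.log y)/x - (x-y)/x^2
        = (x * (Real.log x - Real.log y) - (x-y)) / x^2 := by
      field_simp
    rw [e1, numer_eq hx0 hy0]
    have h1 : (0:ℝ) < x - y := by linarith
    have hd : (0:ℝ) < (x - y)^2 := by positivity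
    have hdle : (x - y)^2 ≤ x^2 := by nlinarith
    have hNnn := numer_nonneg hx0 hy0 (x := x)
    gcongr
  -- h nonneg on (0, x]
  have hhnn : ∀ y ∈ Ioc (0:ℝ) x, 0 ≤ h y := by
    intro y hy
    have e1 : (Real.log x - Real.log y)/x - (x-y)/x^2
        = (x * (Real.log x - Real.log y) - (x-y)) / x^2 := by
      field_simp
    refine mul_nonneg ?_ (Real.rpow_nonneg hy.1.le _)
    rw [e1]
    exact div_nonneg (numer_nonneg hx0 hy.1) (by positivity)
  -- h bounded on (0, x]
  have hhbd : ∀ y ∈ Ioc (0:ℝ) x, h y ≤ (2/(δ*x)) * y ^ (δ/2-1) := by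
    intro y hy
    obtain ⟨hy0, hyx⟩ := hy
    have hrnn : (0:ℝ) ≤ y ^ (δ - 1) := Real.rpow_nonneg hy0.le _
    have hlogx : Real.log x ≤ 0 := Real.log_nonpos hx0.le hx1.le
    have b0 : 0 ≤ (x - y)/x^2 := div_nonneg (by linarith) (by positivity)
    have b1 : (Real.log x - Real.log y)/x - (x-y)/x^2 ≤ (-Real.log y)/x := by
      have : (Real.log x - Real.log y)/x ≤ (-Real.log y)/x :=
        (div_le_div_iff_of_pos_right hx0).mpr (by linarith)
      linarith
    have b2 : (-Real.log y)/x ≤ ((2/δ) * y ^ (-(δ/2)))/x :=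
      (div_le_div_iff_of_pos_right hx0).mpr (neg_log_le hδ0 hy0)
    have b3 : h y ≤ ((2/δ) * y ^ (-(δ/2)))/x * y ^ (δ-1) :=
      mul_le_mul_of_nonneg_right (b1.trans b2) hrnn
    calc h y ≤ ((2/δ) * y ^ (-(δ/2)))/x * y ^ (δ-1) := b3
      _ = (2/(δ*x)) * (y ^ (-(δ/2)) * y ^ (δ-1)) := by ring
      _ = (2/(δ*x)) * y ^ (δ/2-1) := by
          rw [← Real.rpow_add hy0]; congr 2; ring
  -- integrability of h on (0, x]
  have hhcont : ContinuousOn h (Ioc (0:ℝ) x) := by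
    intro y hy
    apply ContinuousAt.continuousWithinAt
    exact (((continuousAt_const.sub (Real.continuousAt_log hy.1.ne')).div_const x).sub
      ((continuousAt_const.sub continuousAt_id).div_const _)).mul
      (Real.continuousAt_rpow_const y _ (Or.inl hy.1.ne'))
  have hhint : IntegrableOn h (Ioc (0:ℝ) x) := by
    have hGint2 : IntegrableOn (fun y : ℝ => (2/(δ*x)) * y ^ (δ/2-1)) (Ioc (0:ℝ) x) :=
      ((intervalIntegrable_iff_integrableOn_Ioc_of_le hx0.le).mp
        (intervalIntegral.intervalIntegrable_rpow' (by linarith))).const_mul _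
    apply Integrable.mono' hGint2 (hhcont.aestronglyMeasurable measurableSet_Ioc)
    filter_upwards [ae_restrict_mem measurableSet_Ioc] with y hy
    rw [Real.norm_eq_abs, abs_of_nonneg (hhnn y hy)]
    exact hhbd y hy
  -- the antiderivative
  set H : ℝ → ℝ := fun y =>
    (Real.log x/(x*δ)) * y ^ δ - (1/(x*δ)) * (y ^ δ * Real.log y)
      + (1/(x*δ^2)) * y ^ δ - (1/(x*δ)) * y ^ δ + (1/(x^2*(δ+1))) * y ^ (δ+1) with hH_def
  have hδ1 : (0:ℝ) < δ + 1 := by linarith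
  have hder : ∀ y ∈ Ioo (0:ℝ) x, HasDerivAt H (h y) y := by
    intro y hy
    obtain ⟨hy0, hyx⟩ := hy
    have d1 : HasDerivAt (fun y : ℝ => y ^ δ) (δ * y ^ (δ-1)) y :=
      Real.hasDerivAt_rpow_const (Or.inl hy0.ne')
    have d2 : HasDerivAt (fun y : ℝ => y ^ δ * Real.log y)
        (δ * y ^ (δ-1) * Real.log y + y ^ δ * y⁻¹) y :=
      d1.mul (Real.hasDerivAt_log hy0.ne')
    have d3 : HasDerivAt (fun y : ℝ => y ^ (δ+1)) ((δ+1) * y ^ δ) y := by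
      have := Real.hasDerivAt_rpow_const (x := y) (p := δ+1) (Or.inl hy0.ne')
      convert this using 2
      ring
    have D := ((((d1.const_mul (Real.log x/(x*δ))).sub (d2.const_mul (1/(x*δ)))).add
      (d1.const_mul (1/(x*δ^2)))).sub (d1.const_mul (1/(x*δ)))).add
      (d3.const_mul (1/(x^2*(δ+1))))
    convert D using 1
    · rfl
    · rfl
    · rfl
    have ev : y ^ δ = y ^ (δ-1) * y := by
      rw [← Real.rpow_add_one hy0.ne' (δ-1)]; congr 1; ring
    simp only [hh_def]
    rw [ev]
    have h1 : x ≠ 0 := hx0.ne'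
    have h2 : y ≠ 0 := hy0.ne'
    have h3 : δ ≠ 0 := hδ0.ne'
    have h4 : (δ:ℝ) + 1 ≠ 0 := hδ1.ne'
    field_simp
    ring
  -- continuity of H on [0, x]
  have c1 : Continuous fun y : ℝ => y ^ δ := by
    rw [continuous_iff_continuousAt]
    intro y
    exact Real.continuousAt_rpow_const y δ (Or.inr hδ0.le)
  have c2 : Continuous fun y : ℝ => y ^ (δ+1) := by
    rw [continuous_iff_continuousAt]
    intro y
    exact Real.continuousAt_rpow_const y (δ+1) (Or.inr hδ1.le)
  have c3 : ContinuousOn (fun y : ℝ => y ^ δ * Real.log y) (Icc (0:ℝ) x) := by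
    have cc : ContinuousOn (fun y : ℝ => (1/δ) * (y ^ δ * Real.log (y ^ δ))) (Icc (0:ℝ) x) :=
      (continuous_const.mul (Real.continuous_mul_log.comp c1)).continuousOn
    refine ContinuousOn.congr cc ?_
    intro y hy
    rcases eq_or_lt_of_le hy.1 with h0 | h0
    · simp [← h0, Real.zero_rpow hδ0.ne']
    · simp only []
      rw [Real.log_rpow h0]
      field_simp
  have hcontH : ContinuousOn H (Icc (0:ℝ) x) := by
    simp only [hH_def]
    exact ((((continuousOn_const.mul c1.continuousOn).sub (continuousOn_const.mul c3)).add
      (continuousOn_const.mul c1.continuousOn)).sub (continuousOn_const.mul c1.continuousOn)).add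
      (continuousOn_const.mul c2.continuousOn)
  -- FTC
  have hint0x : IntervalIntegrable h volume 0 x :=
    (intervalIntegrable_iff_integrableOn_Ioc_of_le hx0.le).mpr hhint
  have key := intervalIntegral.integral_eq_sub_of_hasDeriv_right_of_le hx0.le hcontH
    (fun y hy => (hder y hy).hasDerivWithinAt) hint0x
  have hH0 : H 0 = 0 := by
    simp [hH_def, Real.zero_rpow hδ0.ne', Real.zero_rpow hδ1.ne', Real.log_zero]
  have hIoo : ∫ y in Ioo (0:ℝ) x, h y = H x := by
    rw [← MeasureTheory.integral_Ioc_eq_integral_Ioo, ← intervalIntegral.integral_of_le hx0.le,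
      key, hH0, sub_zero]
  -- value of H x
  have hxp : (0:ℝ) < x ^ (δ-1) := Real.rpow_pos_of_pos hx0 _
  have ex1 : x ^ δ = x ^ (δ-1) * x := by
    rw [← Real.rpow_add_one hx0.ne' (δ-1)]; congr 1; ring
  have ex2 : x ^ (δ+1) = x ^ (δ-1) * x * x := by
    rw [Real.rpow_add_one hx0.ne' δ, ex1]
  have hHx : H x = x ^ (δ-1) * (1/δ^2 - 1/δ + 1/(δ+1)) := by
    simp only [hH_def]
    rw [ex1, ex2]
    have h1 : x ≠ 0 := hx0.ne'
    have h3 : δ ≠ 0 := hδ0.ne'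
    have h4 : (δ:ℝ) + 1 ≠ 0 := hδ1.ne'
    field_simp
    ring
  have scalar : (1/2) * δ⁻¹ ^ 2 ≤ 1/δ^2 - 1/δ + 1/(δ+1) := by
    have e : (1/δ^2 - 1/δ + 1/(δ+1)) - (1/2) * δ⁻¹ ^ 2 = (1-δ)/(2*δ^2*(δ+1)) := by
      have h3 : δ ≠ 0 := hδ0.ne'
      have h4 : (δ:ℝ) + 1 ≠ 0 := hδ1.ne'
      field_simp
      ring
    nlinarith [div_pos (by linarith : (0:ℝ) < 1-δ)
      (by positivity : (0:ℝ) < 2*δ^2*(δ+1))]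
  have step0 : (1/2) * δ⁻¹ ^ 2 * x ^ (δ-1) ≤ H x := by
    rw [hHx]
    calc (1/2) * δ⁻¹ ^ 2 * x ^ (δ-1) = x ^ (δ-1) * ((1/2) * δ⁻¹ ^ 2) := by ring
      _ ≤ x ^ (δ-1) * (1/δ^2 - 1/δ + 1/(δ+1)) := mul_le_mul_of_nonneg_left scalar hxp.le
  have step1 : ∫ y in Ioo (0:ℝ) x, h y ≤ ∫ y in Ioo (0:ℝ) x, g y :=
    setIntegral_mono_on (hhint.mono_set Ioo_subset_Ioc_self)
      (hgint.mono_set (Ioo_subset_Ioo_right hx1.le)) measurableSet_Ioo hhg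
  have step2 : ∫ y in Ioo (0:ℝ) x, g y ≤ ∫ y in Ioo (0:ℝ) 1, g y := by
    refine setIntegral_mono_set hgint ?_ ((Ioo_subset_Ioo_right hx1.le).eventuallyLE)
    filter_upwards [ae_restrict_mem measurableSet_Ioo] with y hy using hgnn y hy
  have final : (1/2) * δ⁻¹ ^ 2 * x ^ (δ-1) ≤ TAf δ x := by
    rw [hTA]
    calc (1/2) * δ⁻¹ ^ 2 * x ^ (δ-1) ≤ H x := step0
      _ = ∫ y in Ioo (0:ℝ) x, h y := hIoo.symm
      _ ≤ ∫ y in Ioo (0:ℝ) x, g y := step1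
      _ ≤ ∫ y in Ioo (0:ℝ) 1, g y := step2
  exact final.trans (le_abs_self _)
end

section
/- Let p ∈ (1,∞) and δ ∈ (0, 1/2), and let w(x) = |x|^{(p−1)(1−δ)} on ℝ. Then w ∈ A_p(ℝ) and there exist constants c(p), C(p) > 0 with c(p) δ^{−(p−1)} ≤ [w]_{A_p} ≤ C(p) δ^{−(p−1)}. -/
open MeasureTheory Set

/-- The `A_p` expression of the weight `w(x) = |x|^((p-1)(1-δ))` on the interval
`(a, b]`: `(⟨w⟩_I)(⟨w^{-1/(p-1)}⟩_I)^{p-1}`, noting `w^{-1/(p-1)}(x) = |x|^(δ-1)`. -/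
noncomputable def apExpr (p δ a b : ℝ) : ℝ :=
  ((b - a)⁻¹ * ∫ x in Set.Ioc a b, |x| ^ ((p - 1) * (1 - δ))) *
    ((b - a)⁻¹ * ∫ x in Set.Ioc a b, |x| ^ (δ - 1)) ^ (p - 1)

namespace PW

lemma intervalIntegrable_abs_rpow {r : ℝ} (hr : -1 < r) (a b : ℝ) :
    IntervalIntegrable (fun x : ℝ => |x| ^ r) volume a b := by
  suffices h : ∀ c : ℝ, 0 ≤ c → IntervalIntegrable (fun x : ℝ => |x| ^ r) volume 0 c by
    have key : ∀ c : ℝ, IntervalIntegrable (fun x : ℝ => |x| ^ r) volume 0 c := by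
      intro c
      rcases le_total 0 c with hc | hc
      · exact h c hc
      · have := (IntervalIntegrable.iff_comp_neg (f := fun x : ℝ => |x| ^ r) (by simp)).mp (h (-c) (by linarith))
        simp only [abs_neg, neg_zero, neg_neg] at this
        exact this
    exact (key a).symm.trans (key b)
  intro c hc
  have : IntervalIntegrable (fun x : ℝ => x ^ r) volume 0 c :=
    intervalIntegral.intervalIntegrable_rpow' hr
  rw [intervalIntegrable_iff, uIoc_of_le hc] at this ⊢
  exact this.congr_fun (fun x hx => by rw [abs_of_pos hx.1]) measurableSet_Ioc

lemma integrableOn_abs_rpow {r : ℝ} (hr : -1 < r) (a b : ℝ) (hab : a ≤ b) :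
    IntegrableOn (fun x : ℝ => |x| ^ r) (Ioc a b) := by
  have := intervalIntegrable_abs_rpow hr a b
  rwa [intervalIntegrable_iff, uIoc_of_le hab] at this

lemma integral_Ioc_abs_rpow {r b : ℝ} (hr : -1 < r) (hb : 0 ≤ b) :
    ∫ x in Ioc 0 b, |x| ^ r = b ^ (r + 1) / (r + 1) := by
  have h1 : ∫ x in Ioc 0 b, |x| ^ r = ∫ x in Ioc 0 b, x ^ r :=
    setIntegral_congr_fun measurableSet_Ioc (fun x hx => by rw [abs_of_pos hx.1])
  rw [h1, ← intervalIntegral.integral_of_le hb, integral_rpow (Or.inl hr),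
    Real.zero_rpow (by linarith), sub_zero]

lemma integral_Ioc_abs_rpow_symm {r b : ℝ} (hr : -1 < r) (hb : 0 ≤ b) :
    ∫ x in Ioc (-b) b, |x| ^ r = 2 * (b ^ (r + 1) / (r + 1)) := by
  have hsplit : Ioc (-b) b = Ioc (-b) 0 ∪ Ioc 0 b :=
    (Ioc_union_Ioc_eq_Ioc (by linarith) hb).symm
  rw [hsplit, setIntegral_union (Ioc_disjoint_Ioc_of_le le_rfl) measurableSet_Ioc
    (integrableOn_abs_rpow hr _ _ (by linarith)) (integrableOn_abs_rpow hr _ _ hb)]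
  have hneg : ∫ x in Ioc (-b) 0, |x| ^ r = ∫ x in Ioc 0 b, |x| ^ r := by
    have := intervalIntegral.integral_comp_neg (a := 0) (b := b) (fun x : ℝ => |x| ^ r)
    simp only [abs_neg, neg_zero] at this
    rw [← intervalIntegral.integral_of_le (by linarith : -b ≤ (0:ℝ)), ← this,
      intervalIntegral.integral_of_le hb]
  rw [hneg, integral_Ioc_abs_rpow hr hb]
  ring

lemma setIntegral_Ioc_le_const {f : ℝ → ℝ} {a b M : ℝ} (hab : a ≤ b)
    (hf : IntegrableOn f (Ioc a b)) (hM : ∀ x ∈ Ioc a b, f x ≤ M) :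
    ∫ x in Ioc a b, f x ≤ M * (b - a) := by
  calc ∫ x in Ioc a b, f x ≤ ∫ _x in Ioc a b, M :=
        setIntegral_mono_on hf (integrableOn_const (by
          rw [Real.volume_Ioc]; exact ENNReal.ofReal_ne_top)) measurableSet_Ioc hM
    _ = M * (b - a) := by
        rw [setIntegral_const, Real.volume_real_Ioc_of_le hab,
          smul_eq_mul]
        ring

end PW

/-- The power weight `|x|^((p-1)(1-δ))` is an `A_p` weight on `ℝ` with
`[w]_{A_p} ≈ δ^{-(p-1)}`. -/
theorem power_weight_Ap (p : ℝ) (hp : 1 < p) :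
    ∃ c > 0, ∃ C > 0, ∀ δ ∈ Set.Ioo (0:ℝ) (1/2),
      (∀ a b : ℝ, a < b → apExpr p δ a b ≤ C * δ ^ (-(p - 1))) ∧
      ∃ a b : ℝ, a < b ∧ c * δ ^ (-(p - 1)) ≤ apExpr p δ a b := by
  have hp0 : (0:ℝ) < p := by linarith
  refine ⟨p⁻¹, by positivity, 4 ^ p, by positivity, fun δ hδ => ?_⟩
  obtain ⟨hδ0, hδ2⟩ := hδ
  have hδ1 : δ < 1 := by linarith
  have hp1 : (0:ℝ) < p - 1 := by linarith
  set α := (p - 1) * (1 - δ) with hα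
  have hα0 : 0 < α := by nlinarith
  have hαp : α ≤ p - 1 := by nlinarith
  have hr1 : (-1:ℝ) < α := by linarith
  have hr2 : (-1:ℝ) < δ - 1 := by linarith
  -- facts about δ ^ (-(p-1))
  have hdpow : (0:ℝ) < δ ^ (-(p-1)) := Real.rpow_pos_of_pos hδ0 _
  have hdval : δ ^ (-(p-1)) = (δ ^ (p-1))⁻¹ := Real.rpow_neg hδ0.le _
  have hdp1 : δ ^ (p-1) ≤ 1 := Real.rpow_le_one hδ0.le hδ1.le hp1.le
  have hdp0 : (0:ℝ) < δ ^ (p-1) := Real.rpow_pos_of_pos hδ0 _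
  have hdpow1 : (1:ℝ) ≤ δ ^ (-(p-1)) := by
    rw [hdval]
    exact (one_le_inv₀ hdp0).mpr hdp1
  -- key algebraic identity
  have key_id : ∀ t : ℝ, 0 < t → t ^ α * (t ^ (δ - 1)) ^ (p - 1) = 1 := by
    intro t ht
    rw [← Real.rpow_mul ht.le, ← Real.rpow_add ht,
      show α + (δ - 1) * (p - 1) = 0 by rw [hα]; ring, Real.rpow_zero]
  have h4 : (4:ℝ) * 4 ^ (p-1) = 4 ^ p := by
    calc (4:ℝ) * 4 ^ (p-1) = 4 ^ (1:ℝ) * 4 ^ (p-1) := by rw [Real.rpow_one]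
      _ = 4 ^ (1 + (p-1)) := (Real.rpow_add (by norm_num) _ _).symm
      _ = 4 ^ p := by ring_nf
  constructor
  · -- upper bound
    have symm : ∀ a b : ℝ, a ≤ b → apExpr p δ a b = apExpr p δ (-b) (-a) := by
      intro a b hab
      have e : ∀ r : ℝ, ∫ x in Ioc a b, |x| ^ r = ∫ x in Ioc (-b) (-a), |x| ^ r := by
        intro r
        have := intervalIntegral.integral_comp_neg (a := a) (b := b) (fun x : ℝ => |x| ^ r)
        simp only [abs_neg] at this
        rw [← intervalIntegral.integral_of_le hab, this,
          intervalIntegral.integral_of_le (by linarith : -b ≤ -a)]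
      simp only [apExpr, ← hα, e, show (-a) - (-b) = b - a by ring]
    have main : ∀ a b : ℝ, a < b → 0 ≤ a + b →
        apExpr p δ a b ≤ 4 ^ p * δ ^ (-(p-1)) := by
      intro a b hab hcen
      have hb : 0 < b := by linarith
      have hba : 0 < b - a := by linarith
      have hInt1 : 0 ≤ ∫ x in Ioc a b, |x| ^ α :=
        setIntegral_nonneg measurableSet_Ioc fun x _ => Real.rpow_nonneg (abs_nonneg x) _
      have hInt2 : 0 ≤ ∫ x in Ioc a b, |x| ^ (δ - 1) :=
        setIntegral_nonneg measurableSet_Ioc fun x _ => Real.rpow_nonneg (abs_nonneg x) _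
      have hA1nn : 0 ≤ (b - a)⁻¹ * ∫ x in Ioc a b, |x| ^ α := by positivity
      have hA2nn : 0 ≤ (b - a)⁻¹ * ∫ x in Ioc a b, |x| ^ (δ - 1) := by positivity
      rcases lt_or_ge a (b/2) with hcase | hcase
      · -- interval reaches near/past the origin
        have hsub : Ioc a b ⊆ Ioc (-b) b := Ioc_subset_Ioc (by linarith) le_rfl
        have hI1 : ∫ x in Ioc a b, |x| ^ α ≤ 2 * (b ^ (α+1) / (α+1)) := by
          rw [← PW.integral_Ioc_abs_rpow_symm hr1 hb.le]
          exact setIntegral_mono_set (PW.integrableOn_abs_rpow hr1 _ _ (by linarith))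
            (Filter.Eventually.of_forall fun x => Real.rpow_nonneg (abs_nonneg x) _)
            (HasSubset.Subset.eventuallyLE hsub)
        have hI2 : ∫ x in Ioc a b, |x| ^ (δ-1) ≤ 2 * (b ^ ((δ-1)+1) / ((δ-1)+1)) := by
          rw [← PW.integral_Ioc_abs_rpow_symm hr2 hb.le]
          exact setIntegral_mono_set (PW.integrableOn_abs_rpow hr2 _ _ (by linarith))
            (Filter.Eventually.of_forall fun x => Real.rpow_nonneg (abs_nonneg x) _)
            (HasSubset.Subset.eventuallyLE hsub)
        have hinv : (b - a)⁻¹ ≤ 2 / b := by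
          have h1 : b / 2 < b - a := by linarith
          have := inv_anti₀ (by positivity : (0:ℝ) < b/2) h1.le
          rwa [inv_div] at this
        have hA1 : (b - a)⁻¹ * (∫ x in Ioc a b, |x| ^ α) ≤ 4 * b ^ α := by
          have hd : b ^ (α+1) / (α+1) ≤ b ^ (α+1) :=
            div_le_self (Real.rpow_nonneg hb.le _) (by linarith)
          calc (b - a)⁻¹ * (∫ x in Ioc a b, |x| ^ α)
              ≤ (2 / b) * (2 * b ^ (α+1)) :=
                mul_le_mul hinv (by linarith) hInt1 (by positivity)
            _ = 4 * b ^ α := by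
                rw [Real.rpow_add_one hb.ne']; field_simp; ring
        have hA2 : (b - a)⁻¹ * (∫ x in Ioc a b, |x| ^ (δ-1)) ≤ 4 * b ^ (δ-1) / δ := by
          have hI2' : ∫ x in Ioc a b, |x| ^ (δ-1) ≤ 2 * (b ^ δ / δ) := by
            have : (δ - 1) + 1 = δ := by ring
            rwa [this] at hI2
          calc (b - a)⁻¹ * (∫ x in Ioc a b, |x| ^ (δ-1))
              ≤ (2 / b) * (2 * (b ^ δ / δ)) :=
                mul_le_mul hinv hI2' hInt2 (by positivity)
            _ = 4 * b ^ (δ-1) / δ := by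
                rw [Real.rpow_sub hb, Real.rpow_one]; field_simp; ring
        calc apExpr p δ a b
            ≤ (4 * b ^ α) * (4 * b ^ (δ-1) / δ) ^ (p-1) := by
              unfold apExpr
              rw [← hα]
              exact mul_le_mul hA1 (Real.rpow_le_rpow hA2nn hA2 hp1.le)
                (Real.rpow_nonneg hA2nn _) (by positivity)
          _ = 4 ^ p * δ ^ (-(p-1)) := by
              rw [Real.div_rpow (by positivity) hδ0.le,
                Real.mul_rpow (by norm_num) (Real.rpow_nonneg hb.le _), hdval]
              have := key_id b hb
              field_simp
              calc 4 * b ^ α * 4 ^ (p-1) * (b ^ (δ-1)) ^ (p-1)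
                  = (4 * 4 ^ (p-1)) * (b ^ α * (b ^ (δ-1)) ^ (p-1)) := by ring
                _ = 4 ^ p := by rw [this, h4, mul_one]
      · -- interval away from the origin
        have ha : 0 < a := by linarith
        have hb2a : b ≤ 2 * a := by linarith
        have hA1 : (b - a)⁻¹ * (∫ x in Ioc a b, |x| ^ α) ≤ b ^ α := by
          rw [inv_mul_le_iff₀ hba]
          calc ∫ x in Ioc a b, |x| ^ α ≤ b ^ α * (b - a) :=
                PW.setIntegral_Ioc_le_const hab.le (PW.integrableOn_abs_rpow hr1 _ _ hab.le)
                  (fun x hx => Real.rpow_le_rpow (abs_nonneg x)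
                    (by rw [abs_of_pos (lt_trans ha hx.1)]; exact hx.2) hα0.le)
            _ = (b - a) * b ^ α := by ring
        have hA2 : (b - a)⁻¹ * (∫ x in Ioc a b, |x| ^ (δ-1)) ≤ a ^ (δ-1) := by
          rw [inv_mul_le_iff₀ hba]
          calc ∫ x in Ioc a b, |x| ^ (δ-1) ≤ a ^ (δ-1) * (b - a) :=
                PW.setIntegral_Ioc_le_const hab.le (PW.integrableOn_abs_rpow hr2 _ _ hab.le)
                  (fun x hx => Real.rpow_le_rpow_of_nonpos ha
                    (by rw [abs_of_pos (lt_trans ha hx.1)]; exact hx.1.le) (by linarith))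
            _ = (b - a) * a ^ (δ-1) := by ring
        have step : apExpr p δ a b ≤ b ^ α * (a ^ (δ-1)) ^ (p-1) := by
          unfold apExpr
          rw [← hα]
          exact mul_le_mul hA1 (Real.rpow_le_rpow hA2nn hA2 hp1.le)
            (Real.rpow_nonneg hA2nn _) (Real.rpow_nonneg hb.le _)
        have step2 : b ^ α * (a ^ (δ-1)) ^ (p-1) ≤ 2 ^ α := by
          have hb2 : b ^ α ≤ (2*a) ^ α :=
            Real.rpow_le_rpow hb.le hb2a hα0.le
          calc b ^ α * (a ^ (δ-1)) ^ (p-1)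
              ≤ (2*a) ^ α * (a ^ (δ-1)) ^ (p-1) :=
                mul_le_mul_of_nonneg_right hb2 (Real.rpow_nonneg (Real.rpow_nonneg ha.le _) _)
            _ = 2 ^ α * (a ^ α * (a ^ (δ-1)) ^ (p-1)) := by
                rw [Real.mul_rpow (by norm_num) ha.le]; ring
            _ = 2 ^ α := by rw [key_id a ha, mul_one]
        have step3 : (2:ℝ) ^ α ≤ 4 ^ p := by
          calc (2:ℝ) ^ α ≤ 2 ^ p := Real.rpow_le_rpow_of_exponent_le one_le_two (by linarith)
            _ ≤ 4 ^ p := Real.rpow_le_rpow (by norm_num) (by norm_num) hp0.le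
        calc apExpr p δ a b ≤ 2 ^ α := le_trans step step2
          _ ≤ 4 ^ p := step3
          _ ≤ 4 ^ p * δ ^ (-(p-1)) := le_mul_of_one_le_right (by positivity) hdpow1
    intro a b hab
    rcases le_total 0 (a + b) with h | h
    · exact main a b hab h
    · rw [symm a b hab.le]
      exact main (-b) (-a) (by linarith) (by linarith)
  · -- lower bound on (0, 1]
    refine ⟨0, 1, one_pos, ?_⟩
    have e1 : apExpr p δ 0 1 = (α+1)⁻¹ * ((δ ^ (p-1))⁻¹) := by
      unfold apExpr
      rw [← hα]
      rw [show (1:ℝ) - 0 = 1 by norm_num, inv_one, one_mul, one_mul,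
        PW.integral_Ioc_abs_rpow hr1 zero_le_one, PW.integral_Ioc_abs_rpow hr2 zero_le_one,
        Real.one_rpow, Real.one_rpow, show (δ - 1) + 1 = δ by ring]
      rw [Real.div_rpow zero_le_one hδ0.le, Real.one_rpow, one_div, one_div]
    rw [e1, hdval]
    have hle : p⁻¹ ≤ (α+1)⁻¹ := by
      apply inv_anti₀ (by linarith)
      nlinarith
    exact mul_le_mul_of_nonneg_right hle (by positivity)
end
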